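/- Let S ⊂ ℝ³ be a C² surface, and γ : I → S a unit-speed curve lying on the unit sphere ∂B₁ such that at each point the unit normal ν of S is ε-close to being tangent to the sphere (|⟨ν, x⟩| ≤ ε at each x ∈ γ ⊂ ∂B₁) and the second fundamental form of S along γ satisfies |A| ≤ δ. Then the geodesic curvature of γ as a curve in ∂B₁ is bounded by C(ε + δ) for a universal constant C. -/

import Mathlib

open scoped RealInnerProductSpace


/-- Let `γ` be a unit-speed `C²` curve lying on the unit sphere
`∂B₁ ⊂ ℝ³` and on a `C²` surface `S` with unit normal field `ν` (so `ν ∘ γ` is a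
unit field orthogonal to `γ'`).  Suppose at each point the normal `ν` is `ε`-close
to being tangent to the sphere, `|⟨ν, γ(t)⟩| ≤ ε` (with `ε ≤ 1/2`), and the second
fundamental form of `S` along `γ` satisfies `|A| ≤ δ`, so that
`|⟨γ''(t), ν(t)⟩| ≤ δ`.  Then the geodesic curvature of `γ` as a curve in the unit
sphere — the norm of the tangential projection `γ'' + γ` of `γ''` — is bounded by
`C(ε + δ)` for a universal constant `C`. -/
theorem stmt14 :
    ∃ C : ℝ, 0 < C ∧
      ∀ (ε δ : ℝ), 0 ≤ ε → ε ≤ 1/2 → 0 ≤ δ →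
      ∀ (γ ν : ℝ → EuclideanSpace ℝ (Fin 3)),
        ContDiff ℝ 2 γ →
        (∀ t, ‖γ t‖ = 1) →
        (∀ t, ‖deriv γ t‖ = 1) →
        (∀ t, ‖ν t‖ = 1) →
        (∀ t, inner ℝ (ν t) (deriv γ t) = (0:ℝ)) →
        (∀ t, |(inner ℝ (ν t) (γ t) : ℝ)| ≤ ε) →
        (∀ t, |(inner ℝ (deriv (deriv γ) t) (ν t) : ℝ)| ≤ δ) →
        ∀ t, ‖deriv (deriv γ) t + γ t‖ ≤ C * (ε + δ) := by
  refine ⟨2, by norm_num, ?_⟩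
  intro ε δ hε hε2 hδ γ ν hγ hγ1 hγ'1 hν1 hνγ' hνγ hA t
  have hγ2 : ContDiff ℝ (1 + 1) γ := by norm_num; exact hγ
  obtain ⟨hd1, -, hc1⟩ := contDiff_succ_iff_deriv.mp hγ2
  have hd2 : Differentiable ℝ (deriv γ) := hc1.differentiable one_ne_zero
  have hTx : ∀ s, ⟪deriv γ s, γ s⟫ = 0 := by
    intro s
    have h1 : HasDerivAt (fun u => ⟪γ u, γ u⟫) (⟪γ s, deriv γ s⟫ + ⟪deriv γ s, γ s⟫) s :=
      (hd1 s).hasDerivAt.inner ℝ (hd1 s).hasDerivAt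
    have h2 : HasDerivAt (fun u => ⟪γ u, γ u⟫) 0 s := by
      have he : (fun u => ⟪γ u, γ u⟫) = fun _ => (1:ℝ) := by
        funext u
        rw [real_inner_self_eq_norm_sq, hγ1 u]; norm_num
      rw [he]; exact hasDerivAt_const s 1
    have h3 := h1.unique h2
    rw [real_inner_comm (γ s)] at h3
    rw [real_inner_comm]
    linarith
  have hacc1 : ⟪deriv (deriv γ) t, γ t⟫ = -1 := by
    have h1 : HasDerivAt (fun u => ⟪deriv γ u, γ u⟫)
        (⟪deriv γ t, deriv γ t⟫ + ⟪deriv (deriv γ) t, γ t⟫) t :=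
      (hd2 t).hasDerivAt.inner ℝ (hd1 t).hasDerivAt
    have h2 : HasDerivAt (fun u => ⟪deriv γ u, γ u⟫) 0 t := by
      have he : (fun u => ⟪deriv γ u, γ u⟫) = fun _ => (0:ℝ) := funext hTx
      rw [he]; exact hasDerivAt_const t 0
    have h3 := h1.unique h2
    have h4 : ⟪deriv γ t, deriv γ t⟫ = 1 := by
      rw [real_inner_self_eq_norm_sq, hγ'1 t]; norm_num
    linarith
  have hacc2 : ⟪deriv (deriv γ) t, deriv γ t⟫ = 0 := by
    have h1 : HasDerivAt (fun u => ⟪deriv γ u, deriv γ u⟫)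
        (⟪deriv γ t, deriv (deriv γ) t⟫ + ⟪deriv (deriv γ) t, deriv γ t⟫) t :=
      (hd2 t).hasDerivAt.inner ℝ (hd2 t).hasDerivAt
    have h2 : HasDerivAt (fun u => ⟪deriv γ u, deriv γ u⟫) 0 t := by
      have he : (fun u => ⟪deriv γ u, deriv γ u⟫) = fun _ => (1:ℝ) := by
        funext u; rw [real_inner_self_eq_norm_sq, hγ'1 u]; norm_num
      rw [he]; exact hasDerivAt_const t 1
    have h3 := h1.unique h2
    rw [real_inner_comm (deriv γ t)] at h3
    rw [real_inner_comm]
    linarith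
  set v : EuclideanSpace ℝ (Fin 3) := deriv (deriv γ) t + γ t with hv
  have hvx : ⟪v, γ t⟫ = 0 := by
    rw [hv, inner_add_left, hacc1, real_inner_self_eq_norm_sq, hγ1 t]; norm_num
  have hvT : ⟪v, deriv γ t⟫ = 0 := by
    rw [hv, inner_add_left, hacc2, real_inner_comm]
    rw [hTx t]; ring
  have hvN : |⟪v, ν t⟫| ≤ ε + δ := by
    rw [hv, inner_add_left]
    calc |⟪deriv (deriv γ) t, ν t⟫ + ⟪γ t, ν t⟫|
        ≤ |⟪deriv (deriv γ) t, ν t⟫| + |⟪γ t, ν t⟫| := abs_add_le _ _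
      _ ≤ δ + ε := by
          refine add_le_add (hA t) ?_
          rw [real_inner_comm]; exact hνγ t
      _ = ε + δ := by ring
  rcases eq_or_ne v 0 with h0 | h0
  · rw [h0, norm_zero]; positivity
  have hvnorm : ‖v‖ ≠ 0 := norm_ne_zero_iff.mpr h0
  clear_value v
  set u : EuclideanSpace ℝ (Fin 3) := ‖v‖⁻¹ • v with hu
  have hun : ‖u‖ = 1 := by
    rw [hu, norm_smul, norm_inv, norm_norm, inv_mul_cancel₀ hvnorm]
  have hxT : ⟪γ t, deriv γ t⟫ = 0 := by rw [real_inner_comm]; exact hTx t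
  have hxu : ⟪γ t, u⟫ = 0 := by
    rw [hu, real_inner_smul_right, real_inner_comm, hvx, mul_zero]
  have hTu : ⟪deriv γ t, u⟫ = 0 := by
    rw [hu, real_inner_smul_right, real_inner_comm, hvT, mul_zero]
  have hvu : ∀ w : EuclideanSpace ℝ (Fin 3), ⟪w, u⟫ * ‖v‖ = ⟪w, v⟫ := by
    intro w
    rw [hu, real_inner_smul_right, mul_comm (‖v‖⁻¹), mul_assoc,
      inv_mul_cancel₀ hvnorm, mul_one]
  clear_value u
  set b : Fin 3 → EuclideanSpace ℝ (Fin 3) := ![γ t, deriv γ t, u] with hb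
  have hb0 : b 0 = γ t := rfl
  have hb1 : b 1 = deriv γ t := rfl
  have hb2 : b 2 = u := rfl
  have hon : Orthonormal ℝ b := by
    rw [orthonormal_iff_ite]
    intro i j
    fin_cases i <;> fin_cases j <;>
      simp only [Fin.mk_zero, Fin.mk_one, if_true, if_false,
        Fin.isValue, ite_true, ite_false, reduceIte]
    · show (inner ℝ (γ t) (γ t) : ℝ) = 1
      rw [real_inner_self_eq_norm_sq, hγ1 t]; norm_num
    · exact hxT
    · exact hxu
    · show (inner ℝ (deriv γ t) (γ t) : ℝ) = 0
      rw [real_inner_comm]; exact hxT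
    · show (inner ℝ (deriv γ t) (deriv γ t) : ℝ) = 1
      rw [real_inner_self_eq_norm_sq, hγ'1 t]; norm_num
    · exact hTu
    · show (inner ℝ u (γ t) : ℝ) = 0
      rw [real_inner_comm]; exact hxu
    · show (inner ℝ u (deriv γ t) : ℝ) = 0
      rw [real_inner_comm]; exact hTu
    · show (inner ℝ u u : ℝ) = 1
      rw [real_inner_self_eq_norm_sq, hun]; norm_num
  have hspan : ⊤ ≤ Submodule.span ℝ (Set.range b) := by
    have hli := hon.linearIndependent
    have hcard : Fintype.card (Fin 3) = Module.finrank ℝ (EuclideanSpace ℝ (Fin 3)) := by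
      simp
    exact (hli.span_eq_top_of_card_eq_finrank hcard).ge
  let B : OrthonormalBasis (Fin 3) ℝ (EuclideanSpace ℝ (Fin 3)) :=
    OrthonormalBasis.mk hon hspan
  have hpar : ∑ i : Fin 3, ⟪ν t, B i⟫ * ⟪B i, ν t⟫ = ⟪ν t, ν t⟫ :=
    B.sum_inner_mul_inner (ν t) (ν t)
  have hBb : ∀ i, B i = b i := fun i => by
    rw [show B = OrthonormalBasis.mk hon hspan from rfl, OrthonormalBasis.coe_mk]
  have hNN : ⟪ν t, ν t⟫ = 1 := by rw [real_inner_self_eq_norm_sq, hν1 t]; norm_num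
  have hkey : ⟪ν t, γ t⟫^2 + ⟪ν t, u⟫^2 = 1 := by
    rw [Fin.sum_univ_three, hBb 0, hBb 1, hBb 2, hb0, hb1, hb2, hNN, hνγ' t,
      real_inner_comm (ν t) (γ t), real_inner_comm (ν t) u] at hpar
    nlinarith [hpar]
  clear hpar hBb hNN hb0 hb1 hb2 hb
  clear B
  clear hspan hon b
  clear hTx hacc1 hacc2 hxT hxu hTu hd1 hd2 hc1 hγ2 hγ hvx hvT hγ1 hγ'1 hν1 hνγ' hA hv hu
  have hu2 : (1:ℝ)/2 ≤ |⟪ν t, u⟫| := by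
    have h1 : ⟪ν t, γ t⟫^2 ≤ ε^2 := by
      nlinarith [hνγ t, abs_nonneg (⟪ν t, γ t⟫), sq_abs (⟪ν t, γ t⟫)]
    have h2 : (3:ℝ)/4 ≤ ⟪ν t, u⟫^2 := by nlinarith
    nlinarith [sq_abs (⟪ν t, u⟫), abs_nonneg (⟪ν t, u⟫)]
  have hnv : ‖v‖ ≤ 2 * (ε + δ) := by
    have h1 : ‖v‖ / 2 ≤ |⟪ν t, u⟫| * ‖v‖ := by
      have := norm_nonneg v
      nlinarith
    have h2 : |⟪ν t, u⟫| * ‖v‖ = |⟪ν t, v⟫| := by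
      rw [← hvu (ν t), abs_mul, abs_of_nonneg (norm_nonneg v)]
    have h3 : |⟪ν t, v⟫| ≤ ε + δ := by rw [real_inner_comm]; exact hvN
    linarith
  linarith [hnv]
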